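/- For all ζ, ζ_*, ζ', ζ'_* ∈ 𝓔 and ω ∈ S², the map S_ω[ζ,ζ_*,ζ',ζ'_*] is continuously differentiable on the open set F[ζ,ζ_*,ζ',ζ'_*] := {(v,v_*) ∈ ℝ³×ℝ³ : Δ(v,v_*,ζ,ζ_*,ζ',ζ'_*) > 0 and v ≠ v_*}, and the absolute value of the determinant of its (total) derivative at any (v,v_*) ∈ F[ζ,ζ_*,ζ',ζ'_*] equals |v' − v'_*| / |v − v_*|, where (v',v'_*) = S_ω[ζ,ζ_*,ζ',ζ'_*](v,v_*). -/

import Mathlib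

open MeasureTheory Real

noncomputable section

/-- ℝ³ with its Euclidean structure. -/
abbrev V3 := EuclideanSpace ℝ (Fin 3)

/-- `T_ω[V] = V - 2 (ω ⬝ V) ω`, the reflection with respect to `(ℝω)^⊥`. -/
def Tmap (ω V : V3) : V3 := V - (2 * (inner ℝ ω V : ℝ)) • ω

/-- `Δ(v, v⋆, ζ, ζ⋆, ζ', ζ'⋆) = ¼|v − v⋆|² + (1/m)(ε(ζ) + ε(ζ⋆) − ε(ζ') − ε(ζ'⋆))`. -/
def Δcol (m : ℝ) {𝓔 : Type*} (ε : 𝓔 → ℝ) (v vs : V3) (z zs z' zs' : 𝓔) : ℝ :=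
  (1 / 4) * ‖v - vs‖ ^ 2 + (1 / m) * (ε z + ε zs - ε z' - ε zs')

/-- `F[ζ,ζ⋆,ζ',ζ'⋆] = {(v,v⋆) : Δ > 0 and v ≠ v⋆}`. -/
def Fcol (m : ℝ) {𝓔 : Type*} (ε : 𝓔 → ℝ) (z zs z' zs' : 𝓔) : Set (V3 × V3) :=
  {p | 0 < Δcol m ε p.1 p.2 z zs z' zs' ∧ p.1 ≠ p.2}

/-- The collision transformation `S_ω[ζ,ζ⋆,ζ',ζ'⋆] (v, v⋆) = (v', v'⋆)`. -/
def Scol (m : ℝ) {𝓔 : Type*} (ε : 𝓔 → ℝ) (z zs z' zs' : 𝓔) (ω : V3) (p : V3 × V3) :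
    V3 × V3 :=
  ((1 / 2 : ℝ) • (p.1 + p.2) +
      Real.sqrt (Δcol m ε p.1 p.2 z zs z' zs') • Tmap ω (‖p.1 - p.2‖⁻¹ • (p.1 - p.2)),
    (1 / 2 : ℝ) • (p.1 + p.2) -
      Real.sqrt (Δcol m ε p.1 p.2 z zs z' zs') • Tmap ω (‖p.1 - p.2‖⁻¹ • (p.1 - p.2)))

/-! ### Auxiliary definitions -/

/-- Rank-one map `x ↦ ⟪u, x⟫ u`. -/
def rk1 (u : V3) : V3 →L[ℝ] V3 := (innerSL ℝ u).smulRight u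

/-- The reflection `Tmap ω` as a continuous linear map. -/
def Tclm (ω : V3) : V3 →L[ℝ] V3 := ContinuousLinearMap.id ℝ V3 - 2 • rk1 ω

lemma Tclm_apply (ω v : V3) : Tclm ω v = Tmap ω v := by
  simp [Tclm, Tmap, rk1, two_smul, smul_smul, two_mul, add_smul]

lemma Tmap_norm {ω : V3} (hω : ‖ω‖ = 1) (v : V3) : ‖Tmap ω v‖ = ‖v‖ := by
  have h : ‖Tmap ω v‖ ^ 2 = ‖v‖ ^ 2 := by
    rw [Tmap, norm_sub_sq_real, real_inner_smul_right, norm_smul]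
    have : (inner ℝ v ω : ℝ) = inner ℝ ω v := (real_inner_comm v ω).symm
    rw [this]
    simp [hω, mul_pow, abs_mul]
    ring_nf
  calc ‖Tmap ω v‖ = √(‖Tmap ω v‖^2) := (Real.sqrt_sq (norm_nonneg _)).symm
  _ = √(‖v‖^2) := by rw [h]
  _ = ‖v‖ := Real.sqrt_sq (norm_nonneg _)

/-- The scalar coefficient `√(¼‖u‖² + C)·‖u‖⁻¹`. -/
def φf (C : ℝ) (u : V3) : ℝ := Real.sqrt ((1/4)*‖u‖^2 + C) * ‖u‖⁻¹

/-- Derivative coefficient of `φf`. -/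
def βc (C r : ℝ) : ℝ := 1/(4 * Real.sqrt ((1/4)*r^2 + C) * r) - Real.sqrt ((1/4)*r^2 + C) / r^3

lemma Scol_eq (m : ℝ) {𝓔 : Type*} (ε : 𝓔 → ℝ) (z zs z' zs' : 𝓔) (ω : V3) :
    Scol m ε z zs z' zs' ω = fun p =>
      ((1 / 2 : ℝ) • (p.1 + p.2) + φf ((1/m) * (ε z + ε zs - ε z' - ε zs')) (p.1 - p.2) • Tclm ω (p.1 - p.2),
       (1 / 2 : ℝ) • (p.1 + p.2) - φf ((1/m) * (ε z + ε zs - ε z' - ε zs')) (p.1 - p.2) • Tclm ω (p.1 - p.2)) := by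
  funext p
  have hT : Tmap ω (‖p.1 - p.2‖⁻¹ • (p.1 - p.2)) = ‖p.1 - p.2‖⁻¹ • Tmap ω (p.1 - p.2) := by
    simp only [Tmap, inner_smul_right, smul_sub, smul_smul]
    congr 2
    rw [← smul_sub, inner_smul_right]
    ring
  simp only [Scol, hT, Tclm_apply, φf, Δcol, smul_smul]

/-! ### Determinant lemmas -/

lemma det_rk1 (a b : ℝ) (ha : a ≠ 0) (u : V3) :
    LinearMap.det ((a • ContinuousLinearMap.id ℝ V3 + b • rk1 u : V3 →L[ℝ] V3) : V3 →ₗ[ℝ] V3)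
      = a ^ 2 * (a + b * ‖u‖ ^ 2) := by
  have hB : LinearMap.toMatrix (EuclideanSpace.basisFun (Fin 3) ℝ).toBasis
      (EuclideanSpace.basisFun (Fin 3) ℝ).toBasis
      ((a • ContinuousLinearMap.id ℝ V3 + b • rk1 u : V3 →L[ℝ] V3) : V3 →ₗ[ℝ] V3)
      = a • ((1 : Matrix (Fin 3) (Fin 3) ℝ) + (a⁻¹ * b) • (Matrix.replicateCol (Fin 1) u * Matrix.replicateRow (Fin 1) u)) := by
    ext i j
    rw [LinearMap.toMatrix_apply]
    simp [rk1, Matrix.one_apply, real_inner_smul_right,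
      Matrix.mul_apply, PiLp.inner_apply, EuclideanSpace.basisFun_apply, EuclideanSpace.single_apply]
    field_simp [LinearMap.toMatrix_apply, rk1, Matrix.one_apply, real_inner_smul_right,
      Matrix.mul_apply, PiLp.inner_apply, EuclideanSpace.basisFun_apply, EuclideanSpace.single_apply]
    ring_nf
    split_ifs <;> ring
  rw [← LinearMap.det_toMatrix (EuclideanSpace.basisFun (Fin 3) ℝ).toBasis, hB,
    Matrix.det_smul]
  have h2 : (1 : Matrix (Fin 3) (Fin 3) ℝ) + (a⁻¹ * b) • (Matrix.replicateCol (Fin 1) u * Matrix.replicateRow (Fin 1) u)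
      = 1 + Matrix.replicateCol (Fin 1) ((a⁻¹ * b) • u) * Matrix.replicateRow (Fin 1) u := by
    ext i j; simp [Matrix.mul_apply]
  rw [h2]
  have key := Matrix.det_one_add_replicateCol_mul_replicateRow (ι := Fin 1) ((a⁻¹ * b) • u).ofLp u.ofLp
  erw [key]
  have hu : dotProduct u ((a⁻¹ * b) • u) = (a⁻¹ * b) * ‖u‖ ^ 2 := by
    have h3 : ‖u‖ ^ 2 = (inner ℝ u u : ℝ) := (real_inner_self_eq_norm_sq u).symm
    rw [h3, PiLp.inner_apply]
    simp [dotProduct, Finset.mul_sum]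
    exact Finset.sum_congr rfl fun x _ => by ring
  rw [WithLp.ofLp_smul, hu]
  have h4 : Fintype.card (Fin 3) = 3 := by simp
  rw [h4]
  field_simp

lemma det_prodMap' (f g : V3 →ₗ[ℝ] V3) :
    LinearMap.det (f.prodMap g) = LinearMap.det f * LinearMap.det g := by
  classical
  set B := (EuclideanSpace.basisFun (Fin 3) ℝ).toBasis
  rw [← LinearMap.det_toMatrix (B.prod B), LinearMap.toMatrix_prodMap,
    Matrix.det_fromBlocks_zero₂₁, LinearMap.det_toMatrix, LinearMap.det_toMatrix]

lemma clm_det_comp (f g : V3 × V3 →L[ℝ] V3 × V3) :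
    (f.comp g).det = f.det * g.det := by
  rw [ContinuousLinearMap.det, ContinuousLinearMap.toLinearMap_comp, LinearMap.det_comp]

/-! ### Derivative of φf -/

lemma hasFDerivAt_φf (C : ℝ) {u : V3} (hu : u ≠ 0) (hΔ : 0 < (1/4)*‖u‖^2 + C) :
    HasFDerivAt (φf C) (βc C ‖u‖ • (innerSL ℝ u : V3 →L[ℝ] ℝ)) u := by
  have hr : (0:ℝ) < ‖u‖ := norm_pos_iff.mpr hu
  set s₀ : ℝ := ‖u‖^2 with hs₀
  have hs : (0:ℝ) < s₀ := by positivity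
  have hsq : Real.sqrt s₀ = ‖u‖ := Real.sqrt_sq (norm_nonneg u)
  have hΔ' : (0:ℝ) < (1/4)*s₀ + C := hΔ
  have hA : HasDerivAt (fun s : ℝ => (1/4)*s + C) (1/4) s₀ := by
    simpa using ((hasDerivAt_id s₀).const_mul (1/4 : ℝ)).add_const C
  have hB : HasDerivAt (fun s : ℝ => Real.sqrt ((1/4)*s + C))
      ((1/4) / (2 * Real.sqrt ((1/4)*s₀ + C))) s₀ := hA.sqrt hΔ'.ne'
  have hCd : HasDerivAt (fun s : ℝ => (Real.sqrt s)⁻¹)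
      (-(1 / (2 * Real.sqrt s₀)) / (Real.sqrt s₀)^2) s₀ :=
    (Real.hasDerivAt_sqrt hs.ne').inv (by positivity)
  have hψ : HasDerivAt (fun s : ℝ => Real.sqrt ((1/4)*s + C) * (Real.sqrt s)⁻¹)
      ((1/4) / (2 * Real.sqrt ((1/4)*s₀ + C)) * (Real.sqrt s₀)⁻¹
        + Real.sqrt ((1/4)*s₀ + C) * (-(1 / (2 * Real.sqrt s₀)) / (Real.sqrt s₀)^2)) s₀ :=
    hB.mul hCd
  have hns : HasFDerivAt (fun x : V3 => ‖x‖^2) (2 • (innerSL ℝ u : V3 →L[ℝ] ℝ)) u := by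
    simpa using (hasFDerivAt_id u).norm_sq
  have hcomp := hψ.comp_hasFDerivAt u hns
  have hcomp2 : HasFDerivAt (φf C)
      ((1/4 / (2 * Real.sqrt (1/4 * s₀ + C)) * (Real.sqrt s₀)⁻¹
        + Real.sqrt (1/4 * s₀ + C) * (-(1 / (2 * Real.sqrt s₀)) / (Real.sqrt s₀)^2))
        • (2 • (innerSL ℝ u : V3 →L[ℝ] ℝ))) u := by
    have heq : ((fun s : ℝ => Real.sqrt ((1/4)*s + C) * (Real.sqrt s)⁻¹) ∘ fun x : V3 => ‖x‖^2)
        = φf C := by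
      funext x; simp only [Function.comp, φf, Real.sqrt_sq (norm_nonneg x)]
    rw [← heq]; exact hcomp
  refine hcomp2.congr_fderiv ?_
  ext v
  simp [βc, hsq, ContinuousLinearMap.smul_apply, two_smul]
  have h1 : Real.sqrt ((1/4)*‖u‖^2 + C) ≠ 0 := by positivity
  field_simp
  ring
/-! ### The derivative of the collision map -/

def Lmap (C : ℝ) (ω w : V3) : V3 →L[ℝ] V3 :=
  (Tclm ω).comp (φf C w • ContinuousLinearMap.id ℝ V3 + βc C ‖w‖ • rk1 w)

def Aclm : V3 × V3 →L[ℝ] V3 × V3 :=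
  ((1/2 : ℝ) • (ContinuousLinearMap.fst ℝ V3 V3 + ContinuousLinearMap.snd ℝ V3 V3)).prod
    ((1/2 : ℝ) • (ContinuousLinearMap.fst ℝ V3 V3 - ContinuousLinearMap.snd ℝ V3 V3))

def Bclm : V3 × V3 →L[ℝ] V3 × V3 :=
  (ContinuousLinearMap.fst ℝ V3 V3 + ContinuousLinearMap.snd ℝ V3 V3).prod
    (ContinuousLinearMap.fst ℝ V3 V3 - ContinuousLinearMap.snd ℝ V3 V3)

def DS (C : ℝ) (ω : V3) (p : V3 × V3) : V3 × V3 →L[ℝ] V3 × V3 :=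
  Aclm.comp ((((ContinuousLinearMap.id ℝ V3).prodMap (2 • Lmap C ω (p.1 - p.2))).comp Bclm))

lemma hasFDerivAt_Scol (m : ℝ) {𝓔 : Type*} (ε : 𝓔 → ℝ) (z zs z' zs' : 𝓔) (ω : V3)
    {p : V3 × V3} (hne : p.1 ≠ p.2) (hΔ : 0 < Δcol m ε p.1 p.2 z zs z' zs') :
    HasFDerivAt (Scol m ε z zs z' zs' ω)
      (DS ((1/m) * (ε z + ε zs - ε z' - ε zs')) ω p) p := by
  set C := (1/m) * (ε z + ε zs - ε z' - ε zs') with hC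
  set w := p.1 - p.2 with hwdef
  have hw : w ≠ 0 := sub_ne_zero.mpr hne
  have hΔ' : 0 < (1/4)*‖w‖^2 + C := hΔ
  rw [Scol_eq]
  have hW : HasFDerivAt (fun q : V3 × V3 => q.1 - q.2)
      (ContinuousLinearMap.fst ℝ V3 V3 - ContinuousLinearMap.snd ℝ V3 V3) p :=
    (ContinuousLinearMap.fst ℝ V3 V3 - ContinuousLinearMap.snd ℝ V3 V3).hasFDerivAt
  have hφ : HasFDerivAt (fun q : V3 × V3 => φf C (q.1 - q.2))
      ((βc C ‖w‖ • (innerSL ℝ w : V3 →L[ℝ] ℝ)).comp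
        (ContinuousLinearMap.fst ℝ V3 V3 - ContinuousLinearMap.snd ℝ V3 V3)) p :=
    by have := (hasFDerivAt_φf C hw hΔ').comp p hW; exact this
  have hT : HasFDerivAt (fun q : V3 × V3 => Tclm ω (q.1 - q.2))
      ((Tclm ω).comp (ContinuousLinearMap.fst ℝ V3 V3 - ContinuousLinearMap.snd ℝ V3 V3)) p :=
    ((Tclm ω).hasFDerivAt).comp p hW
  have hQ := hφ.smul hT
  have hM : HasFDerivAt (fun q : V3 × V3 => (1/2 : ℝ) • (q.1 + q.2))
      ((1/2 : ℝ) • (ContinuousLinearMap.fst ℝ V3 V3 + ContinuousLinearMap.snd ℝ V3 V3)) p :=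
    ((1/2 : ℝ) • (ContinuousLinearMap.fst ℝ V3 V3 + ContinuousLinearMap.snd ℝ V3 V3)).hasFDerivAt
  have hS := (hM.add hQ).prodMk (hM.sub hQ)
  refine hS.congr_fderiv ?_
  refine ContinuousLinearMap.ext fun q => ?_
  have happ : ∀ v : V3, Lmap C ω w v
      = φf C w • Tclm ω v + (βc C ‖w‖ * (inner ℝ w v : ℝ)) • Tclm ω w := by
    intro v
    simp [Lmap, rk1, map_add, _root_.map_smul, smul_smul]
  have hpair : ∀ (x y : V3 × V3), x.1 = y.1 → x.2 = y.2 → x = y := by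
    intro x y h1 h2; exact Prod.ext h1 h2
  simp only [DS, ← hwdef]
  refine hpair _ _ ?_ ?_ <;>
  · simp only [DS, Aclm, Bclm, happ, ContinuousLinearMap.smul_apply, ContinuousLinearMap.add_apply,
      ContinuousLinearMap.sub_apply, ContinuousLinearMap.comp_apply, ContinuousLinearMap.prod_apply,
      ContinuousLinearMap.coe_prodMap', Prod.map_apply, ContinuousLinearMap.smulRight_apply,
      ContinuousLinearMap.coe_fst', ContinuousLinearMap.coe_snd', ContinuousLinearMap.id_apply,
      innerSL_apply_apply, two_smul, smul_add, smul_sub, smul_eq_mul]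
    module

lemma clm_pair_ext {f g : V3 × V3 →L[ℝ] V3 × V3}
    (h : ∀ q : V3 × V3, f q = g q) : f = g := ContinuousLinearMap.ext h

lemma det_DS (C : ℝ) {ω : V3} (hω : ‖ω‖ = 1) (p : V3 × V3) (hne : p.1 ≠ p.2)
    (hΔ : 0 < (1/4)*‖p.1 - p.2‖^2 + C) :
    (DS C ω p).det = -2 * Real.sqrt ((1/4)*‖p.1 - p.2‖^2 + C) / ‖p.1 - p.2‖ := by
  set w := p.1 - p.2 with hwdef
  have hw : w ≠ 0 := sub_ne_zero.mpr hne
  have hr : (0:ℝ) < ‖w‖ := norm_pos_iff.mpr hw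
  set f := Real.sqrt ((1/4)*‖w‖^2 + C) with hf
  have hfpos : 0 < f := Real.sqrt_pos.mpr hΔ
  -- A ∘ B = id
  have hAB : Aclm.comp Bclm = ContinuousLinearMap.id ℝ (V3 × V3) := by
    refine ContinuousLinearMap.ext fun q => ?_
    have hpair : ∀ (x y : V3 × V3), x.1 = y.1 → x.2 = y.2 → x = y := by
      intro x y h1 h2; exact Prod.ext h1 h2
    refine hpair _ _ ?_ ?_ <;>
    · simp only [Aclm, Bclm, ContinuousLinearMap.comp_apply, ContinuousLinearMap.prod_apply,
        ContinuousLinearMap.smul_apply, ContinuousLinearMap.add_apply,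
        ContinuousLinearMap.sub_apply, ContinuousLinearMap.coe_fst', ContinuousLinearMap.coe_snd',
        ContinuousLinearMap.id_apply]
      module
  have hABdet : Aclm.det * Bclm.det = 1 := by
    rw [← clm_det_comp, hAB]
    simp [ContinuousLinearMap.det]
  -- determinant of the middle block
  have hTeq : Tclm ω = (1:ℝ) • ContinuousLinearMap.id ℝ V3 + (-2 : ℝ) • rk1 ω := by
    refine ContinuousLinearMap.ext fun v => ?_
    simp [Tclm, two_smul, add_smul, neg_smul]
    module
  have hdetT : LinearMap.det ((Tclm ω : V3 →L[ℝ] V3) : V3 →ₗ[ℝ] V3) = -1 := by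
    rw [hTeq, det_rk1 1 (-2) one_ne_zero ω]
    simp [hω]
    norm_num
  have hφpos : 0 < φf C w := by
    rw [φf]
    positivity
  have hdetK : LinearMap.det ((φf C w • ContinuousLinearMap.id ℝ V3 + βc C ‖w‖ • rk1 w :
      V3 →L[ℝ] V3) : V3 →ₗ[ℝ] V3) = φf C w ^ 2 * (φf C w + βc C ‖w‖ * ‖w‖ ^ 2) :=
    det_rk1 _ _ hφpos.ne' w
  have hdetL : LinearMap.det ((Lmap C ω w : V3 →L[ℝ] V3) : V3 →ₗ[ℝ] V3)
      = -(φf C w ^ 2 * (φf C w + βc C ‖w‖ * ‖w‖ ^ 2)) := by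
    rw [Lmap, ContinuousLinearMap.toLinearMap_comp, LinearMap.det_comp, hdetT, hdetK]
    ring
  have hP : (((ContinuousLinearMap.id ℝ V3).prodMap (2 • Lmap C ω w)) :
      V3 × V3 →L[ℝ] V3 × V3).det
      = 8 * LinearMap.det ((Lmap C ω w : V3 →L[ℝ] V3) : V3 →ₗ[ℝ] V3) := by
    rw [ContinuousLinearMap.det, ContinuousLinearMap.coe_prodMap, det_prodMap']
    have h2L : ((2 • Lmap C ω w : V3 →L[ℝ] V3) : V3 →ₗ[ℝ] V3)
        = (2:ℝ) • ((Lmap C ω w : V3 →L[ℝ] V3) : V3 →ₗ[ℝ] V3) := by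
      ext v; simp [two_smul]
    rw [h2L, LinearMap.det_smul]
    have h3 : Module.finrank ℝ V3 = 3 := by simp
    rw [h3, ContinuousLinearMap.coe_id, LinearMap.det_id]
    ring
  -- assemble
  have hdet : (DS C ω p).det
      = Aclm.det * ((((ContinuousLinearMap.id ℝ V3).prodMap (2 • Lmap C ω w)) :
          V3 × V3 →L[ℝ] V3 × V3).det * Bclm.det) := by
    rw [DS, clm_det_comp, clm_det_comp]
  rw [hdet, hP, hdetL]
  have : Aclm.det * (8 * -(φf C w ^ 2 * (φf C w + βc C ‖w‖ * ‖w‖ ^ 2)) * Bclm.det)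
      = (Aclm.det * Bclm.det) * (8 * -(φf C w ^ 2 * (φf C w + βc C ‖w‖ * ‖w‖ ^ 2))) := by ring
  rw [this, hABdet, one_mul]
  -- numeric computation
  rw [φf, βc, ← hf]
  field_simp
  ring

lemma contDiffAt_Scol (m : ℝ) {𝓔 : Type*} (ε : 𝓔 → ℝ) (z zs z' zs' : 𝓔) (ω : V3)
    {p : V3 × V3} (hne : p.1 ≠ p.2) (hΔ : 0 < Δcol m ε p.1 p.2 z zs z' zs') :
    ContDiffAt ℝ 1 (Scol m ε z zs z' zs' ω) p := by
  set C := (1/m) * (ε z + ε zs - ε z' - ε zs') with hC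
  set w := p.1 - p.2 with hwdef
  have hw : w ≠ 0 := sub_ne_zero.mpr hne
  have hΔ' : 0 < (1/4)*‖w‖^2 + C := hΔ
  rw [Scol_eq]
  have hsub : ContDiffAt ℝ 1 (fun q : V3 × V3 => q.1 - q.2) p :=
    (contDiff_fst.sub contDiff_snd).contDiffAt
  have hs : ContDiffAt ℝ 1 (fun u : V3 => Real.sqrt ((1/4)*‖u‖^2 + C)) w :=
    (((contDiff_const.mul (contDiff_norm_sq ℝ)).add contDiff_const).contDiffAt).sqrt hΔ'.ne'
  have hninv : ContDiffAt ℝ 1 (fun u : V3 => ‖u‖⁻¹) w :=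
    ((contDiffAt_id.norm ℝ hw).inv (norm_ne_zero_iff.mpr hw))
  have hφ : ContDiffAt ℝ 1 (φf C) w := hs.mul hninv
  have hφc : ContDiffAt ℝ 1 (fun q : V3 × V3 => φf C (q.1 - q.2)) p := by have := hφ.comp p hsub; exact this
  have hT : ContDiffAt ℝ 1 (fun q : V3 × V3 => Tclm ω (q.1 - q.2)) p :=
    ((Tclm ω).contDiff.comp (contDiff_fst.sub contDiff_snd)).contDiffAt
  have hQ : ContDiffAt ℝ 1 (fun q : V3 × V3 => φf C (q.1 - q.2) • Tclm ω (q.1 - q.2)) p :=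
    hφc.smul hT
  have hM : ContDiffAt ℝ 1 (fun q : V3 × V3 => (1/2 : ℝ) • (q.1 + q.2)) p :=
    ((contDiff_fst.add contDiff_snd).const_smul (1/2 : ℝ)).contDiffAt
  exact (hM.add hQ).prodMk (hM.sub hQ)

/-- **Lemma 2 (Jacobian of the collision transformation).**
`S_ω[ζ,ζ⋆,ζ',ζ'⋆]` is `C¹` on the open set `F[ζ,ζ⋆,ζ',ζ'⋆]` and for every
`(v,v⋆) ∈ F[ζ,ζ⋆,ζ',ζ'⋆]` the absolute value of the determinant of its total derivative
equals `|v' − v'⋆| / |v − v⋆|`, where `(v',v'⋆) = S_ω[ζ,ζ⋆,ζ',ζ'⋆](v,v⋆)`. -/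
theorem collision_map_jacobian
    {𝓔 : Type*} [MeasurableSpace 𝓔] (μ : Measure 𝓔) (hμ : μ Set.univ ≠ 0)
    (m : ℝ) (hm : 0 < m) (ε : 𝓔 → ℝ) (hε : Measurable ε)
    (z zs z' zs' : 𝓔) (ω : V3) (hω : ‖ω‖ = 1) :
    IsOpen (Fcol m ε z zs z' zs') ∧
    ContDiffOn ℝ 1 (Scol m ε z zs z' zs' ω) (Fcol m ε z zs z' zs') ∧
    (∀ p ∈ Fcol m ε z zs z' zs',
      |(fderiv ℝ (Scol m ε z zs z' zs' ω) p).det|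
        = ‖(Scol m ε z zs z' zs' ω p).1 - (Scol m ε z zs z' zs' ω p).2‖ / ‖p.1 - p.2‖) := by
  set C := (1/m) * (ε z + ε zs - ε z' - ε zs') with hC
  refine ⟨?_, ?_, ?_⟩
  · -- openness
    have hcont : Continuous (fun p : V3 × V3 => Δcol m ε p.1 p.2 z zs z' zs') := by
      simp only [Δcol]
      exact (continuous_const.mul (((continuous_fst.sub continuous_snd).norm).pow 2)).add
        continuous_const
    have h1 : IsOpen {p : V3 × V3 | 0 < Δcol m ε p.1 p.2 z zs z' zs'} :=
      isOpen_lt continuous_const hcont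
    have h2 : IsOpen {p : V3 × V3 | p.1 ≠ p.2} :=
      isOpen_ne_fun continuous_fst continuous_snd
    exact (h1.inter h2 : IsOpen ({p : V3 × V3 | 0 < Δcol m ε p.1 p.2 z zs z' zs'}
      ∩ {p : V3 × V3 | p.1 ≠ p.2}))
  · -- C¹
    intro p hp
    exact (contDiffAt_Scol m ε z zs z' zs' ω hp.2 hp.1).contDiffWithinAt
  · -- Jacobian
    rintro p ⟨hΔ, hne⟩
    have hder := hasFDerivAt_Scol m ε z zs z' zs' ω hne hΔ
    rw [hder.fderiv]
    have hΔ' : 0 < (1/4)*‖p.1 - p.2‖^2 + C := hΔ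
    rw [det_DS C hω p hne hΔ']
    -- compute the right-hand side
    have hw : p.1 - p.2 ≠ 0 := sub_ne_zero.mpr hne
    have hr : (0:ℝ) < ‖p.1 - p.2‖ := norm_pos_iff.mpr hw
    have hfpos : 0 < Real.sqrt ((1/4)*‖p.1 - p.2‖^2 + C) := Real.sqrt_pos.mpr hΔ'
    have hdiff : (Scol m ε z zs z' zs' ω p).1 - (Scol m ε z zs z' zs' ω p).2
        = (2 * Real.sqrt (Δcol m ε p.1 p.2 z zs z' zs'))
            • Tmap ω (‖p.1 - p.2‖⁻¹ • (p.1 - p.2)) := by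
      simp only [Scol]
      module
    rw [hdiff, norm_smul, Tmap_norm hω, norm_smul]
    have h1 : ‖‖p.1 - p.2‖⁻¹‖ * ‖p.1 - p.2‖ = 1 := by
      rw [norm_inv, norm_norm]
      field_simp
    have hΔeq : Δcol m ε p.1 p.2 z zs z' zs' = (1/4)*‖p.1 - p.2‖^2 + C := rfl
    rw [hΔeq, h1, mul_one]
    rw [abs_div, abs_norm]
    congr 1
    rw [abs_mul]
    rw [abs_of_nonneg (Real.sqrt_nonneg _)]
    norm_num
    exact (abs_of_nonneg (Real.sqrt_nonneg _)).symm
end
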